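/- For every s ≥ 1 and every tuple (r_1,…,r_s) ∈ ℕ^s with ∑_{j=1}^s r_j = s+1 and ∑_{j=1}^s j·r_j = 2s, the number of rooted ordered (plane) trees t with exactly s+1 vertices satisfying r_j(t) = r_j for all j ∈ {1,…,s} equals 2·s!/(r_1!·r_2!⋯r_s!). -/

import Mathlib

/-- Rooted ordered (plane) trees: a root together with a finite ordered list of subtrees. -/
inductive PlaneTree where
  | node : List PlaneTree → PlaneTree

/-- Number of vertices of a plane tree. -/
def PlaneTree.size : PlaneTree → ℕ
  | .node l => 1 + (l.attach.map (fun t => PlaneTree.size t.1)).sum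
decreasing_by
  have := List.sizeOf_lt_of_mem t.2
  simp only [PlaneTree.node.sizeOf_spec]; omega

/-- Number of vertices of degree `j` in a subtree all of whose vertices are non-root
(the degree of a non-root vertex is its number of children plus one). -/
def PlaneTree.degCountNonRoot (j : ℕ) : PlaneTree → ℕ
  | .node l => (if l.length + 1 = j then 1 else 0)
      + (l.attach.map (fun t => PlaneTree.degCountNonRoot j t.1)).sum
decreasing_by
  have := List.sizeOf_lt_of_mem t.2
  simp only [PlaneTree.node.sizeOf_spec]; omega

/-- Number of vertices of degree `j` in a rooted plane tree
(the degree of the root is its number of children). -/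
def PlaneTree.degCount (j : ℕ) : PlaneTree → ℕ
  | .node l => (if l.length = j then 1 else 0)
      + (l.attach.map (fun t => PlaneTree.degCountNonRoot j t.1)).sum

namespace PlaneTree

theorem ind' (P : PlaneTree → Prop) (h : ∀ l, (∀ t ∈ l, P t) → P (node l)) : ∀ t, P t
  | node l => h l (fun u hu => ind' P h u)
decreasing_by
  have := List.sizeOf_lt_of_mem hu
  simp only [PlaneTree.node.sizeOf_spec]; omega

def code : PlaneTree → List ℕ
  | .node l => l.length :: (l.attach.map (fun t => PlaneTree.code t.1)).flatten
decreasing_by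
  have := List.sizeOf_lt_of_mem t.2
  simp only [PlaneTree.node.sizeOf_spec]; omega

theorem code_node (l : List PlaneTree) :
    code (node l) = l.length :: (l.map code).flatten := by
  rw [code]; simp [List.map_attach_eq_pmap]

theorem size_node (l : List PlaneTree) :
    size (node l) = 1 + (l.map size).sum := by
  rw [size]; simp [List.map_attach_eq_pmap]

theorem degCountNonRoot_node (j : ℕ) (l : List PlaneTree) :
    degCountNonRoot j (node l) = (if l.length + 1 = j then 1 else 0)
      + (l.map (degCountNonRoot j)).sum := by
  rw [degCountNonRoot]; simp [List.map_attach_eq_pmap]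

theorem degCount_node (j : ℕ) (l : List PlaneTree) :
    degCount j (node l) = (if l.length = j then 1 else 0)
      + (l.map (degCountNonRoot j)).sum := by
  rw [degCount]; simp [List.map_attach_eq_pmap]

theorem code_length (t : PlaneTree) : (code t).length = t.size := by
  induction t using ind' with
  | h l ih =>
    rw [code_node, size_node]
    simp only [List.length_cons, List.length_flatten, List.map_map]
    have : l.map (List.length ∘ code) = l.map size := List.map_congr_left fun t ht => ih t ht
    rw [this, Nat.add_comm]


theorem size_pos (t : PlaneTree) : 1 ≤ t.size := by
  cases t with
  | node l => rw [size_node]; omega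

theorem code_sum (t : PlaneTree) : (code t).sum + 1 = t.size := by
  induction t using ind' with
  | h l ih =>
    rw [code_node, size_node]
    simp only [List.sum_cons, List.sum_flatten, List.map_map]
    have e1 : l.map (List.sum ∘ code) = l.map (fun t => t.size - 1) :=
      List.map_congr_left fun t ht => by
        have := ih t ht; simp only [Function.comp_apply]; omega
    rw [e1]
    have h2 : ∀ m : List PlaneTree, (m.map (fun t => t.size - 1)).sum + m.length
        = (m.map size).sum := by
      intro m
      induction m with
      | nil => simp
      | cons a as ihl =>
        have := size_pos a
        simp only [List.map_cons, List.sum_cons, List.length_cons]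
        omega
    have := h2 l
    omega

/-- `IsForest k w` : `w` is the concatenation of the codes of `k` plane trees. -/
def IsForest (k : ℕ) (w : List ℕ) : Prop :=
  w.sum + k = w.length ∧ ∀ n < w.length, n < (w.take n).sum + k

theorem IsForest.cons {k c : ℕ} {w : List ℕ} (h : IsForest (k + c) w) :
    IsForest (k + 1) (c :: w) := by
  obtain ⟨h1, h2⟩ := h
  constructor
  · simp only [List.sum_cons, List.length_cons]; omega
  · intro n hn
    cases n with
    | zero => simp
    | succ m =>
      simp only [List.length_cons] at hn
      have := h2 m (by omega)
      simp only [List.take_succ_cons, List.sum_cons]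
      omega

theorem IsForest.uncons {k c : ℕ} {w : List ℕ} (h : IsForest (k + 1) (c :: w)) :
    IsForest (k + c) w := by
  obtain ⟨h1, h2⟩ := h
  simp only [List.sum_cons, List.length_cons] at h1
  constructor
  · omega
  · intro n hn
    have := h2 (n + 1) (by simp; omega)
    simp only [List.take_succ_cons, List.sum_cons] at this
    omega

theorem IsForest.append {a b : ℕ} {u v : List ℕ} (hu : IsForest a u) (hv : IsForest b v) :
    IsForest (a + b) (u ++ v) := by
  obtain ⟨h1, h2⟩ := hu
  obtain ⟨h3, h4⟩ := hv
  constructor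
  · simp only [List.sum_append, List.length_append]; omega
  · intro n hn
    simp only [List.length_append] at hn
    rw [List.take_append, List.sum_append]
    rcases lt_or_ge n u.length with h | h
    · have := h2 n h; omega
    · rw [List.take_of_length_le h]
      have := h4 (n - u.length) (by omega)
      omega

theorem isForest_flatten_aux (l : List PlaneTree) (h : ∀ t ∈ l, IsForest 1 (code t)) :
    IsForest l.length ((l.map code).flatten) := by
  induction l with
  | nil => exact ⟨by simp, by simp⟩
  | cons t ts ih =>
    have := (h t List.mem_cons_self).append
      (ih (fun u hu => h u (List.mem_cons_of_mem _ hu)))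
    simpa [Nat.add_comm] using this

theorem isForest_code (t : PlaneTree) : IsForest 1 (code t) := by
  induction t using ind' with
  | h m ihm =>
    have h0 : IsForest (0 + m.length) ((m.map code).flatten) := by
      rw [Nat.zero_add]; exact isForest_flatten_aux m ihm
    rw [code_node]
    simpa using h0.cons

theorem isForest_code_flatten (l : List PlaneTree) :
    IsForest l.length ((l.map code).flatten) :=
  isForest_flatten_aux l (fun t _ => isForest_code t)
def dstep (c : ℕ) (st : List PlaneTree) : List PlaneTree := node (st.take c) :: st.drop c

def decode (w : List ℕ) : List PlaneTree := w.foldr dstep []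

theorem decode_flatten_append (l : List PlaneTree) (w : List ℕ) :
    (∀ t ∈ l, ∀ w', decode (code t ++ w') = t :: decode w') →
    decode ((l.map code).flatten ++ w) = l ++ decode w := by
  induction l with
  | nil => simp
  | cons t ts ih =>
    intro h
    simp only [List.map_cons, List.flatten_cons, List.append_assoc]
    rw [h t List.mem_cons_self, ih (fun u hu w' => h u (List.mem_cons_of_mem _ hu) w')]
    simp

theorem decode_code_append (t : PlaneTree) (w : List ℕ) :
    decode (code t ++ w) = t :: decode w := by
  induction t using ind' generalizing w with
  | h l ih =>
    rw [code_node]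
    simp only [List.cons_append]
    rw [decode, List.foldr_cons, ← decode]
    rw [decode_flatten_append l w (fun u hu w' => ih u hu w')]
    rw [dstep, List.take_append_of_le_length le_rfl, List.drop_append_of_le_length le_rfl]
    simp

theorem code_injective : Function.Injective code := by
  intro a b h
  have ha := decode_code_append a []
  have hb := decode_code_append b []
  rw [h] at ha
  rw [ha] at hb
  injection hb

theorem exists_forest (w : List ℕ) (k : ℕ) (h : IsForest k w) :
    ∃ l : List PlaneTree, l.length = k ∧ (l.map code).flatten = w := by
  induction w generalizing k with
  | nil =>
    obtain ⟨h1, _⟩ := h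
    exact ⟨[], by simpa using h1.symm, by simp⟩
  | cons c w' ihw =>
      obtain ⟨h1, h2⟩ := h
      simp only [List.sum_cons, List.length_cons] at h1
      have hk : 1 ≤ k := by
        by_contra hk
        have := h2 0 (by simp)
        simp at this; omega
      have hf : IsForest (k - 1 + c) w' := by
        have : IsForest ((k-1) + 1) (c :: w') := by
          have : k - 1 + 1 = k := by omega
          rw [this]; exact ⟨by simp; omega, h2⟩
        exact this.uncons
      obtain ⟨l', hl1, hl2⟩ := ihw _ hf
      refine ⟨node (l'.take c) :: l'.drop c, ?_, ?_⟩
      · simp only [List.length_cons, List.length_drop]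
        omega
      · simp only [List.map_cons, List.flatten_cons, code_node]
        rw [List.length_take]
        have hcl : c ≤ l'.length := by omega
        rw [min_eq_left hcl]
        simp only [List.cons_append]
        congr 1
        rw [← List.flatten_append, ← List.map_append, List.take_append_drop, hl2]

theorem degCountNonRoot_code (j : ℕ) (t : PlaneTree) :
    degCountNonRoot (j + 1) t = (code t).count j := by
  induction t using ind' with
  | h l ih =>
    rw [degCountNonRoot_node, code_node, List.count_cons]
    have : (l.map (degCountNonRoot (j+1))).sum = ((l.map code).flatten.count j) := by
      rw [List.count_flatten, List.map_map]
      congr 1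
      exact List.map_congr_left fun t ht => ih t ht
    rw [this]
    by_cases hlj : l.length = j
    · simp [hlj, Nat.add_comm]
    · have h1 : ¬ (l.length + 1 = j + 1) := by omega
      have h2 : (l.length == j) = false := by simpa using hlj
      simp [h1, h2, hlj]

theorem degCount_code (j : ℕ) (t : PlaneTree) :
    degCount (j + 1) t
    = (if (code t).headI = j + 1 then 1 else 0) + (code t).tail.count j := by
  cases t with
  | node l =>
    rw [degCount_node, code_node]
    simp only [List.headI, List.tail]
    congr 1
    rw [List.count_flatten, List.map_map]
    congr 1
    exact List.map_congr_left fun t _ => degCountNonRoot_code j t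
end PlaneTree

namespace CycleWork
variable {s : ℕ}

def NN (hs : 0 < s) (v : Fin s → Fin s) (n : ℕ) : ℕ := (v ⟨n % s, Nat.mod_lt n hs⟩).1

def PS (hs : 0 < s) (v : Fin s → Fin s) (n : ℕ) : ℕ := ∑ i ∈ Finset.range n, NN hs v i

def Z (hs : 0 < s) (v : Fin s → Fin s) (n : ℕ) : ℤ := (PS hs v n : ℤ) - n

def M (hs : 0 < s) (v : Fin s → Fin s) : ℕ → ℤ
  | 0 => 0
  | n + 1 => min (M hs v n) (Z hs v (n + 1))

variable (hs : 0 < s) (v : Fin s → Fin s)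

theorem NN_add_s (n : ℕ) : NN hs v (n + s) = NN hs v n := by
  simp [NN, Nat.add_mod_right]

theorem PS_succ (n : ℕ) : PS hs v (n + 1) = PS hs v n + NN hs v n := by
  simp [PS, Finset.sum_range_succ]

theorem PS_period (n : ℕ) : PS hs v (n + s) = PS hs v n + PS hs v s := by
  induction n with
  | zero => simp [PS]
  | succ m ih =>
    have e : m + 1 + s = (m + s) + 1 := by omega
    rw [e, PS_succ, ih, NN_add_s, PS_succ]
    omega

theorem PS_sum : PS hs v s = ∑ i, (v i).1 := by
  rw [PS, Finset.sum_range fun i => NN hs v i]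
  refine Finset.sum_congr rfl fun i _ => ?_
  unfold NN
  have e : (⟨(i : ℕ) % s, Nat.mod_lt _ hs⟩ : Fin s) = i := Fin.ext (Nat.mod_eq_of_lt i.2)
  rw [e]

theorem NN_lt (n : ℕ) : NN hs v n < s := (v _).2

variable (k : ℕ)

theorem Z_zero : Z hs v 0 = 0 := by simp [Z, PS]

theorem Z_step (n : ℕ) : Z hs v n - 1 ≤ Z hs v (n + 1) := by
  simp only [Z, PS_succ hs v n]
  push_cast
  omega

theorem Z_period (hsum : ∑ i, (v i).1 + k = s) (n : ℕ) :
    Z hs v (n + s) = Z hs v n - k := by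
  have h1 := PS_period hs v n
  have h2 : PS hs v s + k = s := by rw [PS_sum]; exact hsum
  unfold Z
  rw [h1]
  push_cast
  omega

theorem M_le (n j : ℕ) (h : j ≤ n) : M hs v n ≤ Z hs v j := by
  induction n with
  | zero =>
    have : j = 0 := by omega
    subst this; simp [M, Z_zero]
  | succ m ih =>
    rcases Nat.lt_or_ge j (m + 1) with h' | h'
    · exact le_trans (min_le_left _ _) (ih (by omega))
    · have : j = m + 1 := by omega
      subst this; exact min_le_right _ _
theorem M_exists (n : ℕ) : ∃ j ≤ n, M hs v n = Z hs v j := by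
  induction n with
  | zero => exact ⟨0, le_rfl, (Z_zero hs v).symm⟩
  | succ m ih =>
    obtain ⟨j, hj, hZ⟩ := ih
    rcases le_or_gt (M hs v m) (Z hs v (m + 1)) with h | h
    · exact ⟨j, by omega, by simp only [M]; rw [min_eq_left h]; exact hZ⟩
    · exact ⟨m + 1, le_rfl, by simp only [M]; rw [min_eq_right (le_of_lt h)]⟩

theorem M_step (n : ℕ) : M hs v n - 1 ≤ M hs v (n + 1) ∧ M hs v (n + 1) ≤ M hs v n := by
  constructor
  · obtain ⟨j, hj, hZ⟩ := M_exists hs v n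
    simp only [M, le_min_iff]
    constructor
    · omega
    · calc M hs v n - 1 ≤ Z hs v n - 1 := by have := M_le hs v n n le_rfl; omega
        _ ≤ Z hs v (n + 1) := Z_step hs v n
  · exact min_le_left _ _

/-- `dropAt n` : the running minimum strictly decreases at step `n+1`. -/
def dropAt (n : ℕ) : Prop := Z hs v (n + 1) < M hs v n

instance (n : ℕ) : Decidable (dropAt hs v n) := by unfold dropAt; infer_instance

theorem M_succ_of_drop (n : ℕ) (h : dropAt hs v n) : M hs v (n + 1) = M hs v n - 1 := by
  have h1 := M_step hs v n
  have h2 : M hs v (n + 1) ≤ Z hs v (n + 1) := min_le_right _ _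
  have h3 : M hs v n ≤ Z hs v n := M_le hs v n n le_rfl
  have h4 := Z_step hs v n
  unfold dropAt at h
  omega

theorem M_succ_of_not_drop (n : ℕ) (h : ¬ dropAt hs v n) : M hs v (n + 1) = M hs v n := by
  unfold dropAt at h
  simp only [M]
  omega

theorem drop_count (a b : ℕ) (hab : a ≤ b) :
    (((Finset.Ico a b).filter (dropAt hs v)).card : ℤ) = M hs v a - M hs v b := by
  induction b with
  | zero =>
    have : a = 0 := by omega
    subst this; simp
  | succ m ih =>
    rcases Nat.lt_or_ge m a with h | h
    · have : a = m + 1 := by omega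
      subst this; simp
    · rw [Finset.Ico_add_one_right_eq_Icc, ← Finset.Ico_insert_right h, Finset.filter_insert]
      by_cases hd : dropAt hs v m
      · rw [if_pos hd, Finset.card_insert_of_notMem (by simp), M_succ_of_drop hs v m hd]
        push_cast
        rw [ih h]; ring
      · rw [if_neg hd, M_succ_of_not_drop hs v m hd, ih h]

/-- `GoodAt a` : the rotation of the word starting at position `a` is a valid forest word. -/
def GoodAt (a : ℕ) : Prop := ∀ t < s, Z hs v (a + s) < Z hs v (a + t)

instance (a : ℕ) : Decidable (GoodAt hs v a) := by unfold GoodAt; infer_instance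

theorem good_iff_drop (hk : 1 ≤ k) (hsum : ∑ i, (v i).1 + k = s) (a : ℕ) (ha : a < s) :
    GoodAt hs v a ↔ dropAt hs v (a + s - 1) := by
  have hs1 : a + s - 1 + 1 = a + s := by omega
  constructor
  · intro hg
    have key : ∀ m, ∀ j, j < a + s → a + s - j ≤ m → Z hs v (a + s) < Z hs v j := by
      intro m
      induction m with
      | zero => intro j hj hm; omega
      | succ m ih =>
        intro j hj hm
        rcases Nat.lt_or_ge j a with h | h
        · have hper := Z_period hs v k hsum j
          have hrec : Z hs v (a + s) < Z hs v (j + s) := ih (j + s) (by omega) (by omega)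
          omega
        · have : j - a < s := by omega
          have := hg (j - a) this
          have e : a + (j - a) = j := by omega
          rw [e] at this
          exact this
    unfold dropAt
    rw [hs1]
    obtain ⟨j, hj, hZ⟩ := M_exists hs v (a + s - 1)
    rw [hZ]
    exact key (a + s) j (by omega) (by omega)
  · intro hd t ht
    unfold dropAt at hd
    rw [hs1] at hd
    exact lt_of_lt_of_le hd (M_le hs v (a + s - 1) (a + t) (by omega))

theorem M_two_periods (hk : 1 ≤ k) (hsum : ∑ i, (v i).1 + k = s) :
    M hs v (2 * s - 1) = M hs v (s - 1) - k := by
  apply le_antisymm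
  · obtain ⟨j, hj, hZ⟩ := M_exists hs v (s - 1)
    have h1 : M hs v (2 * s - 1) ≤ Z hs v (j + s) := M_le hs v _ _ (by omega)
    have h2 := Z_period hs v k hsum j
    omega
  · obtain ⟨j, hj, hZ⟩ := M_exists hs v (2 * s - 1)
    rcases Nat.lt_or_ge j s with h | h
    · have := M_le hs v (s - 1) j (by omega)
      omega
    · have e : j - s + s = j := by omega
      have h2 := Z_period hs v k hsum (j - s)
      rw [e] at h2
      have := M_le hs v (s - 1) (j - s) (by omega)
      omega

theorem cycle_count (hk : 1 ≤ k) (hsum : ∑ i, (v i).1 + k = s) :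
    ((Finset.range s).filter (GoodAt hs v)).card = k := by
  have hcard : ((Finset.range s).filter (GoodAt hs v)).card
      = ((Finset.Ico (s - 1) (2 * s - 1)).filter (dropAt hs v)).card := by
    apply Finset.card_bij (fun a _ => a + s - 1)
    · intro a ha
      simp only [Finset.mem_filter, Finset.mem_range] at ha
      simp only [Finset.mem_filter, Finset.mem_Ico]
      exact ⟨⟨by omega, by omega⟩, (good_iff_drop hs v k hk hsum a ha.1).mp ha.2⟩
    · intro a ha b hb h
      simp only [Finset.mem_filter, Finset.mem_range] at ha hb
      omega
    · intro n hn
      simp only [Finset.mem_filter, Finset.mem_Ico] at hn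
      refine ⟨n + 1 - s, ?_, by omega⟩
      simp only [Finset.mem_filter, Finset.mem_range]
      have e : n + 1 - s + s - 1 = n := by omega
      refine ⟨by omega, ?_⟩
      rw [← e] at hn
      exact (good_iff_drop hs v k hk hsum (n + 1 - s) (by omega)).mpr hn.2
  have hint : (((Finset.Ico (s - 1) (2 * s - 1)).filter (dropAt hs v)).card : ℤ)
      = M hs v (s - 1) - M hs v (2 * s - 1) := drop_count hs v _ _ (by omega)
  rw [M_two_periods hs v k hk hsum] at hint
  have : (((Finset.Ico (s - 1) (2 * s - 1)).filter (dropAt hs v)).card : ℤ) = k := by omega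
  rw [hcard]
  exact_mod_cast this

end CycleWork

def fib {s : ℕ} (v : Fin s → Fin s) (j : Fin s) : ℕ :=
  (Finset.univ.filter (fun i => v i = j)).card

theorem fib_card_subtype {s : ℕ} (v : Fin s → Fin s) (j : Fin s) :
    Fintype.card {i // v i = j} = fib v j := by
  rw [fib, Fintype.card_subtype]

theorem fib_comp {s : ℕ} (v : Fin s → Fin s) (σ : Equiv.Perm (Fin s)) (j : Fin s) :
    fib (v ∘ σ) j = fib v j := by
  rw [← fib_card_subtype, ← fib_card_subtype]
  exact Fintype.card_congr (Equiv.subtypeEquiv σ (fun i => Iff.rfl))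

theorem exists_perm_of_fib_eq {s : ℕ} (v v' : Fin s → Fin s)
    (h : ∀ j, fib v j = fib v' j) : ∃ σ : Equiv.Perm (Fin s), v = v' ∘ σ := by
  have e : ∀ j, {i // v i = j} ≃ {i // v' i = j} := fun j =>
    Fintype.equivOfCardEq (by rw [fib_card_subtype, fib_card_subtype, h j])
  refine ⟨(Equiv.sigmaFiberEquiv v).symm.trans
    ((Equiv.sigmaCongrRight e).trans (Equiv.sigmaFiberEquiv v')), ?_⟩
  funext i
  simp only [Function.comp_apply, Equiv.trans_apply, Equiv.sigmaFiberEquiv,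
    Equiv.coe_fn_symm_mk, Equiv.sigmaCongrRight_apply, Equiv.coe_fn_mk]
  exact (e (v i) ⟨i, rfl⟩).2.symm

/-- The stabilizer of `v` in the symmetric group is the product of the fiber permutations. -/
def stabEquiv {s : ℕ} (v : Fin s → Fin s) :
    {τ : Equiv.Perm (Fin s) // v ∘ τ = v} ≃ (∀ j, Equiv.Perm {i // v i = j}) where
  toFun τ j :=
    { toFun := fun x => ⟨τ.1 x, by
        have := congrFun τ.2 x.1
        simp only [Function.comp_apply] at this
        rw [this, x.2]⟩
      invFun := fun x => ⟨τ.1.symm x, by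
        have := congrFun τ.2 (τ.1.symm x.1)
        simp only [Function.comp_apply, Equiv.apply_symm_apply] at this
        rw [← this, x.2]⟩
      left_inv := fun x => Subtype.ext (τ.1.symm_apply_apply x)
      right_inv := fun x => Subtype.ext (τ.1.apply_symm_apply x) }
  invFun π := ⟨(Equiv.sigmaFiberEquiv v).symm.trans
      ((Equiv.sigmaCongrRight (fun j => π j)).trans (Equiv.sigmaFiberEquiv v)), by
    funext i
    simp only [Function.comp_apply, Equiv.trans_apply, Equiv.sigmaFiberEquiv,
      Equiv.coe_fn_symm_mk, Equiv.sigmaCongrRight_apply, Equiv.coe_fn_mk]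
    exact (π (v i) ⟨i, rfl⟩).2⟩
  left_inv := fun τ => by
    apply Subtype.ext
    apply Equiv.ext
    intro i
    simp [Equiv.sigmaFiberEquiv, Equiv.sigmaCongrRight]
  right_inv := fun π => by
    funext j
    apply Equiv.ext
    intro x
    obtain ⟨i, hi⟩ := x
    subst hi
    apply Subtype.ext
    simp [Equiv.sigmaFiberEquiv, Equiv.sigmaCongrRight]

theorem multinomial_count {s : ℕ} (g : Fin s → ℕ) (hg : ∑ j, g j = s) :
    Fintype.card {v : Fin s → Fin s // ∀ j, fib v j = g j} * ∏ j, (g j).factorial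
      = s.factorial := by
  classical
  have hcard : Fintype.card (Σ j : Fin s, Fin (g j)) = Fintype.card (Fin s) := by
    simp [hg]
  set e := Fintype.equivOfCardEq hcard with he
  set v₀ : Fin s → Fin s := fun i => (e.symm i).1 with hv₀def
  have hv₀ : ∀ j, fib v₀ j = g j := by
    intro j
    rw [← fib_card_subtype]
    have e1 : {i // v₀ i = j} ≃ {p : Σ j', Fin (g j') // p.1 = j} :=
      Equiv.subtypeEquiv e.symm (fun i => Iff.rfl)
    have e2 : {p : Σ j', Fin (g j') // p.1 = j} ≃ Fin (g j) :=
      { toFun := fun p => Fin.cast (congrArg g p.2) p.1.2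
        invFun := fun x => ⟨⟨j, x⟩, rfl⟩
        left_inv := fun p => by
          obtain ⟨⟨j', y⟩, h⟩ := p
          subst h
          rfl
        right_inv := fun x => rfl }
    rw [Fintype.card_congr (e1.trans e2), Fintype.card_fin]
  set Φ : Equiv.Perm (Fin s) → {v : Fin s → Fin s // ∀ j, fib v j = g j} :=
    fun σ => ⟨v₀ ∘ σ, fun j => by rw [fib_comp]; exact hv₀ j⟩ with hΦ
  have key : ∀ v : {v : Fin s → Fin s // ∀ j, fib v j = g j},
      Fintype.card {σ // Φ σ = v} = ∏ j, (g j).factorial := by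
    intro v
    obtain ⟨σv, hσv⟩ := exists_perm_of_fib_eq v.1 v₀ (fun j => by rw [v.2 j, hv₀ j])
    have eq1 : {σ // Φ σ = v} ≃ {τ : Equiv.Perm (Fin s) // v₀ ∘ τ = v₀} :=
      { toFun := fun σ => ⟨σ.1 * σv⁻¹, by
          have h1 : v₀ ∘ σ.1 = v.1 := congrArg Subtype.val σ.2
          funext i
          have h2 := congrFun h1 (σv⁻¹ i)
          have h3 := congrFun hσv (σv⁻¹ i)
          simp only [Function.comp_apply, Equiv.Perm.mul_apply] at h2 h3 ⊢
          rw [h2, h3, Equiv.Perm.inv_def, Equiv.apply_symm_apply]⟩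
        invFun := fun τ => ⟨τ.1 * σv, by
          apply Subtype.ext
          funext i
          have h2 := congrFun τ.2 (σv i)
          have h3 := congrFun hσv i
          simp only [hΦ, Function.comp_apply, Equiv.Perm.mul_apply] at h2 h3 ⊢
          rw [h2, ← h3]⟩
        left_inv := fun σ => by
          apply Subtype.ext
          group
        right_inv := fun τ => by
          apply Subtype.ext
          group }
    rw [Fintype.card_congr (eq1.trans (stabEquiv v₀)), Fintype.card_pi]
    exact Finset.prod_congr rfl fun j _ => by
      rw [Fintype.card_perm, fib_card_subtype, hv₀ j]
  have total : Fintype.card (Equiv.Perm (Fin s))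
      = Fintype.card {v : Fin s → Fin s // ∀ j, fib v j = g j} * ∏ j, (g j).factorial := by
    rw [← Fintype.card_congr (Equiv.sigmaFiberEquiv Φ), Fintype.card_sigma]
    rw [Finset.sum_congr rfl (fun v _ => key v), Finset.sum_const, Finset.card_univ,
      smul_eq_mul]
  rw [← total, Fintype.card_perm, Fintype.card_fin]

theorem count_ofFn {n : ℕ} (g : Fin n → ℕ) (a : ℕ) :
    (List.ofFn g).count a = (Finset.univ.filter (fun i => g i = a)).card := by
  rw [Finset.card_filter]
  induction n with
  | zero => simp
  | succ m ih =>
    rw [List.ofFn_succ, List.count_cons]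
    simp only [beq_iff_eq]
    rw [ih (fun i => g i.succ), Fin.sum_univ_succ]
    by_cases hga : g 0 = a
    · simp [hga, Nat.add_comm]
    · rw [if_neg hga]
      omega

theorem sum_range_count_eq (v : List ℕ) (m : ℕ) :
    ∑ j ∈ Finset.range m, v.count j = v.countP (fun x => decide (x < m)) := by
  induction v with
  | nil => simp
  | cons a t ih =>
    simp only [List.count_cons, List.countP_cons, beq_iff_eq, decide_eq_true_eq,
      Finset.sum_add_distrib, ih]
    congr 1
    rw [Finset.sum_ite_eq (Finset.range m) a (fun _ => 1)]
    by_cases h : a < m <;> simp [h]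
open CycleWork in
/-- `GoodF k f` : the word of the values of `f` is a valid forest word for `k` trees
(prefix condition only). -/
def GoodF {s : ℕ} (hs : 0 < s) (k : ℕ) (f : Fin s → Fin s) : Prop :=
  ∀ t < s, t < PS hs f t + k

instance {s : ℕ} (hs : 0 < s) (k : ℕ) (f : Fin s → Fin s) :
    Decidable (GoodF hs k f) := by unfold GoodF; infer_instance

def rot {s : ℕ} (a : Fin s) (f : Fin s → Fin s) : Fin s → Fin s := fun i => f (a + i)

theorem rot_eq_comp {s : ℕ} [NeZero s] (a : Fin s) (f : Fin s → Fin s) :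
    rot a f = f ∘ (Equiv.addLeft a) := rfl

theorem fib_rot {s : ℕ} [NeZero s] (a : Fin s) (f : Fin s → Fin s) (j : Fin s) :
    fib (rot a f) j = fib f j := by
  rw [rot_eq_comp]
  exact fib_comp f (Equiv.addLeft a) j

theorem rot_rot_neg {s : ℕ} [NeZero s] (a : Fin s) (f : Fin s → Fin s) :
    rot a (rot (-a) f) = f := by
  funext i
  simp only [rot]
  rw [neg_add_cancel_left]

theorem rot_neg_rot {s : ℕ} [NeZero s] (a : Fin s) (f : Fin s → Fin s) :
    rot (-a) (rot a f) = f := by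
  funext i
  simp only [rot]
  rw [add_neg_cancel_left]

open CycleWork in
theorem PS_rot {s : ℕ} (hs : 0 < s) (f : Fin s → Fin s) (a : Fin s) (t : ℕ) (ht : t ≤ s) :
    PS hs f (a.1 + t) = PS hs f a.1 + PS hs (rot a f) t := by
  induction t with
  | zero => simp [PS]
  | succ m ih =>
    have e : a.1 + (m + 1) = (a.1 + m) + 1 := by omega
    rw [e, PS_succ, PS_succ, ih (by omega)]
    have : NN hs f (a.1 + m) = NN hs (rot a f) m := by
      unfold NN rot
      congr 1
      rw [Fin.add_def]
      apply Fin.ext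
      simp [Nat.add_mod]
    omega

open CycleWork in
theorem goodF_rot_iff {s : ℕ} (hs : 0 < s) (f : Fin s → Fin s) (k : ℕ)
    (hsum : ∑ i, (f i).1 + k = s) (a : Fin s) :
    GoodF hs k (rot a f) ↔ GoodAt hs f a.1 := by
  unfold GoodF GoodAt
  apply forall_congr'
  intro t
  apply imp_congr_right
  intro ht
  have h1 := PS_rot hs f a t (by omega)
  have h2 := Z_period hs f k hsum a.1
  unfold Z at h2 ⊢
  rw [h1]
  constructor
  · intro h
    push_cast
    push_cast at h2
    omega
  · intro h
    push_cast at h h2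
    omega
theorem sum_val_eq_fib {s : ℕ} (f : Fin s → Fin s) :
    ∑ i, (f i).1 = ∑ j, j.1 * fib f j := by
  have h1 : ∀ i : Fin s, (f i).1 = ∑ j : Fin s, if f i = j then j.1 else 0 := fun i => by
    rw [Finset.sum_ite_eq Finset.univ (f i) (fun j => j.1)]
    simp
  rw [Finset.sum_congr rfl (fun i _ => h1 i), Finset.sum_comm]
  refine Finset.sum_congr rfl fun j _ => ?_
  rw [← Finset.sum_filter, Finset.sum_const, fib, smul_eq_mul, Nat.mul_comm]

theorem rot_double_count {s : ℕ} (hs : 0 < s) (k : ℕ) (hk : 1 ≤ k)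
    (cond : (Fin s → Fin s) → Prop) [DecidablePred cond]
    (hrot : ∀ (a : Fin s) f, cond f → cond (rot a f))
    (hsum : ∀ f, cond f → ∑ i, (f i).1 + k = s) :
    s * Fintype.card {f : Fin s → Fin s // cond f ∧ GoodF hs k f}
      = k * Fintype.card {f : Fin s → Fin s // cond f} := by
  haveI : NeZero s := ⟨hs.ne'⟩
  rw [Fintype.card_subtype, Fintype.card_subtype]
  have key : ∀ a : Fin s,
      (Finset.univ.filter (fun f : Fin s → Fin s => cond f ∧ GoodF hs k (rot a f))).card
      = (Finset.univ.filter (fun f : Fin s → Fin s => cond f ∧ GoodF hs k f)).card := by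
    intro a
    apply Finset.card_bij (fun f _ => rot a f)
    · intro f hf
      simp only [Finset.mem_filter, Finset.mem_univ, true_and] at hf ⊢
      exact ⟨hrot a f hf.1, hf.2⟩
    · intro f hf f' hf' h
      have := congrArg (rot (-a)) h
      rwa [rot_neg_rot, rot_neg_rot] at this
    · intro g hg
      simp only [Finset.mem_filter, Finset.mem_univ, true_and] at hg
      refine ⟨rot (-a) g, ?_, rot_rot_neg a g⟩
      simp only [Finset.mem_filter, Finset.mem_univ, true_and]
      rw [rot_rot_neg]
      exact ⟨hrot (-a) g hg.1, hg.2⟩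
  have hcyc : ∀ f, cond f →
      ((Finset.univ : Finset (Fin s)).filter (fun a => GoodF hs k (rot a f))).card = k := by
    intro f hc
    have e1 : ((Finset.univ : Finset (Fin s)).filter (fun a => GoodF hs k (rot a f))).card
        = ((Finset.range s).filter (CycleWork.GoodAt hs f)).card := by
      apply Finset.card_bij (fun a _ => a.1)
      · intro a ha
        simp only [Finset.mem_filter, Finset.mem_univ, true_and] at ha
        simp only [Finset.mem_filter, Finset.mem_range]
        exact ⟨a.2, (goodF_rot_iff hs f k (hsum f hc) a).mp ha⟩
      · intro a _ b _ h
        exact Fin.ext h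
      · intro n hn
        simp only [Finset.mem_filter, Finset.mem_range] at hn
        refine ⟨⟨n, hn.1⟩, ?_, rfl⟩
        simp only [Finset.mem_filter, Finset.mem_univ, true_and]
        exact (goodF_rot_iff hs f k (hsum f hc) ⟨n, hn.1⟩).mpr hn.2
    rw [e1]
    exact CycleWork.cycle_count hs f k hk (hsum f hc)
  have hdouble : ∑ a : Fin s,
      (Finset.univ.filter (fun f : Fin s → Fin s => cond f ∧ GoodF hs k (rot a f))).card
      = ∑ f ∈ Finset.univ.filter cond,
        ((Finset.univ : Finset (Fin s)).filter (fun a => GoodF hs k (rot a f))).card := by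
    simp only [Finset.card_filter]
    rw [Finset.sum_comm, Finset.sum_filter]
    refine Finset.sum_congr rfl fun f _ => ?_
    by_cases hc : cond f
    · simp [hc]
    · simp [hc]
  calc s * (Finset.univ.filter (fun f : Fin s → Fin s => cond f ∧ GoodF hs k f)).card
      = ∑ a : Fin s, (Finset.univ.filter
          (fun f : Fin s → Fin s => cond f ∧ GoodF hs k (rot a f))).card := by
        rw [Finset.sum_congr rfl (fun a _ => key a), Finset.sum_const, Finset.card_univ,
          Fintype.card_fin, smul_eq_mul]
    _ = ∑ f ∈ Finset.univ.filter cond,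
        ((Finset.univ : Finset (Fin s)).filter (fun a => GoodF hs k (rot a f))).card := hdouble
    _ = k * (Finset.univ.filter cond).card := by
        rw [Finset.sum_congr rfl (fun f hf => hcyc f (Finset.mem_filter.mp hf).2),
          Finset.sum_const, smul_eq_mul, Nat.mul_comm]
open PlaneTree in
theorem card_tree_eq_card_words (s : ℕ) (r : Fin s → ℕ) :
    Nat.card {t : PlaneTree // t.size = s + 1 ∧ ∀ j : Fin s, t.degCount (j.1 + 1) = r j}
    = Nat.card {w : List ℕ // w.length = s + 1 ∧ IsForest 1 w ∧
        ∀ j : Fin s, (if w.headI = j.1 + 1 then 1 else 0) + w.tail.count j.1 = r j} := by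
  apply Nat.card_congr
  refine Equiv.ofBijective (fun t => ⟨code t.1, ?_, isForest_code t.1, fun j => ?_⟩) ⟨?_, ?_⟩
  · rw [code_length, t.2.1]
  · rw [← degCount_code]; exact t.2.2 j
  · intro a b h
    exact Subtype.ext (code_injective (congrArg Subtype.val h))
  · rintro ⟨w, h1, h2, h3⟩
    obtain ⟨l, hl1, hl2⟩ := exists_forest w 1 h2
    match l, hl1 with
    | [t], _ =>
      have hct : code t = w := by simpa using hl2
      refine ⟨⟨t, ?_, fun j => ?_⟩, Subtype.ext hct⟩
      · rw [← code_length, hct, h1]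
      · rw [degCount_code, hct]; exact h3 j
open PlaneTree in
theorem card_words_eq_card_sigma (s : ℕ) (hs : 1 ≤ s) (r : Fin s → ℕ)
    (hsum : ∑ j, r j = s + 1) :
    Nat.card {w : List ℕ // w.length = s + 1 ∧ IsForest 1 w ∧
        ∀ j : Fin s, (if w.headI = j.1 + 1 then 1 else 0) + w.tail.count j.1 = r j}
    = Nat.card (Σ d : Fin s, {v : List ℕ // v.length = s ∧ IsForest (d.1 + 1) v ∧
        ∀ j : Fin s, v.count j.1 + (if j = d then 1 else 0) = r j}) := by
  symm
  apply Nat.card_congr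
  refine Equiv.ofBijective (fun p => ⟨(p.1.1 + 1) :: p.2.1, ?_, ?_, fun j => ?_⟩) ⟨?_, ?_⟩
  · simp [p.2.2.1]
  · have h0 : IsForest (0 + (p.1.1 + 1)) p.2.1 := by
      rw [Nat.zero_add]; exact p.2.2.2.1
    simpa using h0.cons
  · have hj := p.2.2.2.2 j
    simp only [List.headI, List.tail]
    by_cases h : j = p.1
    · subst h
      simp only [if_pos rfl] at hj ⊢
      omega
    · have h1 : ¬ ((p.1.1 : ℕ) + 1 = j.1 + 1) := by
        intro hc
        exact h (Fin.ext (by omega)).symm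
      simp only [eq_false h1, if_false]
      rw [if_neg h] at hj
      omega
  · rintro ⟨d, v, hv⟩ ⟨d', v', hv'⟩ h
    have h' := congrArg Subtype.val h
    simp only [List.cons.injEq] at h'
    have hd : d = d' := Fin.ext (by omega)
    subst hd
    have hv2 : v = v' := h'.2
    subst hv2
    rfl
  · rintro ⟨w, h1, h2, h3⟩
    match w, h1 with
    | c :: v, h1 =>
      simp only [List.length_cons] at h1
      have hlen : v.length = s := by omega
      -- c ≥ 1
      have hc1 : 1 ≤ c := by
        have := h2.2 1 (by simp; omega)
        simp at this; omega
      -- sum of counts over range s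
      have hcnt : ∑ j : Fin s, v.count j.1 ≤ v.length := by
        rw [Fin.sum_univ_eq_sum_range (fun n => v.count n) s, sum_range_count_eq]
        exact List.countP_le_length
      -- c ≤ s
      have hcs : c ≤ s := by
        by_contra hcs
        have hall : ∀ j : Fin s, v.count j.1 = r j := by
          intro j
          have := h3 j
          simp only [List.headI, List.tail] at this
          simp only [show (c = j.1 + 1) = False from eq_false (by omega), if_false] at this
          simpa using this
        rw [Finset.sum_congr rfl (fun j _ => hall j)] at hcnt
        have hsum' : Finset.univ.sum r = s + 1 := hsum
        omega
      refine ⟨⟨⟨c - 1, by omega⟩, ⟨v, hlen, ?_, fun j => ?_⟩⟩, ?_⟩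
      · have h0 : IsForest (0 + 1) (c :: v) := by rw [Nat.zero_add]; exact h2
        have := h0.uncons
        rw [Nat.zero_add] at this
        have e : c - 1 + 1 = c := by omega
        rw [e]
        exact this
      · have := h3 j
        simp only [List.headI, List.tail] at this
        by_cases h : j = (⟨c - 1, by omega⟩ : Fin s)
        · have hj : j.1 = c - 1 := by rw [h]
          rw [if_pos h]
          simp only [show (c = j.1 + 1) = True from eq_true (by omega), if_true] at this
          omega
        · have hj : j.1 ≠ c - 1 := fun hc => h (Fin.ext hc)
          rw [if_neg h]
          simp only [show (c = j.1 + 1) = False from eq_false (by omega), if_false] at this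
          omega
      · apply Subtype.ext
        simp only
        congr 1
        omega
theorem count_ofFn_fib {s : ℕ} (f : Fin s → Fin s) (j : Fin s) :
    (List.ofFn (fun i => ((f i).1))).count j.1 = fib f j := by
  rw [count_ofFn, fib]
  congr 1
  apply Finset.filter_congr
  intro i _
  simp [Fin.val_eq_val]

theorem take_sum_ofFn {s : ℕ} (hs : 0 < s) (f : Fin s → Fin s) (n : ℕ) (hn : n ≤ s) :
    ((List.ofFn (fun i => ((f i).1))).take n).sum = CycleWork.PS hs f n := by
  induction n with
  | zero => simp [CycleWork.PS]
  | succ m ih =>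
    have hm : m < (List.ofFn (fun i => ((f i).1))).length := by
      rw [List.length_ofFn]; omega
    rw [List.sum_take_succ _ m hm, ih (by omega), CycleWork.PS_succ]
    congr 1
    rw [List.getElem_ofFn]
    unfold CycleWork.NN
    congr 2
    apply Fin.ext
    simp [Nat.mod_eq_of_lt (by omega : m < s)]

theorem sum_fin_val_of_cond {s : ℕ} (hs : 1 ≤ s) (r : Fin s → ℕ)
    (hsum : ∑ j, r j = s + 1) (hdeg : ∑ j, (j.1 + 1) * r j = 2 * s) (d : Fin s)
    (f : Fin s → Fin s) (hf : ∀ j, fib f j + (if j = d then 1 else 0) = r j) :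
    ∑ i, (f i).1 + (d.1 + 1) = s := by
  have h1 : ∑ j : Fin s, j.1 * r j + (s + 1) = 2 * s := by
    have : ∑ j : Fin s, (j.1 + 1) * r j = ∑ j : Fin s, (j.1 * r j + r j) := by
      refine Finset.sum_congr rfl fun j _ => by ring
    rw [this, Finset.sum_add_distrib, hsum] at hdeg
    omega
  have h2 : ∑ j : Fin s, j.1 * r j = ∑ j : Fin s, j.1 * fib f j + d.1 := by
    have e1 : ∀ j : Fin s, j.1 * r j = j.1 * fib f j + (if j = d then j.1 else 0) := by
      intro j
      rw [← hf j]
      by_cases h : j = d <;> simp [h] <;> ring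
    rw [Finset.sum_congr rfl fun j _ => e1 j, Finset.sum_add_distrib,
      Finset.sum_ite_eq' Finset.univ d (fun j => j.1)]
    simp
  rw [sum_val_eq_fib]
  omega

open PlaneTree in
theorem card_sigma_eq_card_fun (s : ℕ) (hs : 1 ≤ s) (r : Fin s → ℕ)
    (hsum : ∑ j, r j = s + 1) (hdeg : ∑ j, (j.1 + 1) * r j = 2 * s) :
    Nat.card (Σ d : Fin s, {v : List ℕ // v.length = s ∧ IsForest (d.1 + 1) v ∧
        ∀ j : Fin s, v.count j.1 + (if j = d then 1 else 0) = r j})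
    = Nat.card (Σ d : Fin s, {f : Fin s → Fin s //
        (∀ j : Fin s, fib f j + (if j = d then 1 else 0) = r j) ∧ GoodF hs (d.1 + 1) f}) := by
  symm
  apply Nat.card_congr
  apply Equiv.sigmaCongrRight
  intro d
  refine Equiv.ofBijective
    (fun f => ⟨List.ofFn (fun i => ((f.1 i).1)), List.length_ofFn, ⟨?_, ?_⟩, fun j => ?_⟩)
    ⟨?_, ?_⟩
  · rw [List.sum_ofFn, List.length_ofFn]
    exact sum_fin_val_of_cond hs r hsum hdeg d f.1 f.2.1
  · intro n hn
    rw [List.length_ofFn] at hn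
    rw [take_sum_ofFn hs f.1 n (by omega)]
    exact f.2.2 n hn
  · rw [count_ofFn_fib]
    exact f.2.1 j
  · intro a b h
    have h' := congrArg Subtype.val h
    simp only at h'
    apply Subtype.ext
    have := List.ofFn_injective h'
    funext i
    exact Fin.val_injective (congrFun this i)
  · rintro ⟨v, hlen, hforest, hcount⟩
    -- all entries are < s
    have hcnt : ∑ j : Fin s, v.count j.1 = s := by
      have e1 : ∀ j : Fin s, v.count j.1 = r j - (if j = d then 1 else 0) := by
        intro j
        have := hcount j
        omega
      have e2 : ∑ j : Fin s, (v.count j.1 + (if j = d then 1 else 0)) = s + 1 := by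
        rw [Finset.sum_congr rfl fun j _ => hcount j]
        exact hsum
      rw [Finset.sum_add_distrib, Finset.sum_ite_eq' Finset.univ d (fun _ => 1)] at e2
      simpa using e2
    have hmem : ∀ x ∈ v, x < s := by
      have : v.countP (fun x => decide (x < s)) = v.length := by
        rw [← sum_range_count_eq, hlen,
          ← Fin.sum_univ_eq_sum_range (fun n => v.count n) s]
        exact hcnt
      intro x hx
      have := List.countP_eq_length.mp this x hx
      simpa using this
    let f' : Fin s → Fin s := fun i => ⟨v.get ⟨i.1, by omega⟩, hmem _ (v.get_mem _)⟩
    have hofn : List.ofFn (fun i => ((f' i).1)) = v := by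
      apply List.ext_getElem (by simp [hlen])
      intro n h1 h2
      rw [List.getElem_ofFn]
      simp [f', List.get_eq_getElem]
    refine ⟨⟨f', fun j => ?_, fun t ht => ?_⟩, Subtype.ext ?_⟩
    · rw [← count_ofFn_fib, hofn]
      exact hcount j
    · have := hforest.2 t (by rw [hlen]; exact ht)
      rw [← take_sum_ofFn hs f' t (le_of_lt ht), hofn]
      exact this
    · exact hofn
theorem card_cond_mul (s : ℕ) (r : Fin s → ℕ) (hsum : ∑ j, r j = s + 1) (d : Fin s) :
    Fintype.card {f : Fin s → Fin s // ∀ j, fib f j + (if j = d then 1 else 0) = r j}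
      * (∏ j, (r j).factorial) = s.factorial * r d := by
  by_cases hrd : r d = 0
  · have he : IsEmpty {f : Fin s → Fin s // ∀ j, fib f j + (if j = d then 1 else 0) = r j} :=
      ⟨fun ⟨f, hf⟩ => by have := hf d; rw [if_pos rfl, hrd] at this; omega⟩
    rw [Fintype.card_eq_zero, hrd]
    simp
  · set g : Fin s → ℕ := fun j => if j = d then r d - 1 else r j with hg
    have hgsum : ∑ j, g j = s := by
      have e1 : ∀ j : Fin s, r j = g j + (if j = d then 1 else 0) := by
        intro j
        by_cases h : j = d
        · subst h; simp [hg]; omega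
        · simp [hg, h]
      have e2 := Finset.sum_congr rfl (fun j (_ : j ∈ Finset.univ) => e1 j)
      rw [hsum, Finset.sum_add_distrib, Finset.sum_ite_eq' Finset.univ d (fun _ => 1)] at e2
      simp at e2
      omega
    have hiff : ∀ f : Fin s → Fin s,
        (∀ j, fib f j + (if j = d then 1 else 0) = r j) ↔ (∀ j, fib f j = g j) := by
      intro f
      apply forall_congr'
      intro j
      by_cases h : j = d
      · subst h; simp [hg]; omega
      · simp [hg, h]
    rw [Fintype.card_congr (Equiv.subtypeEquivRight hiff)]
    have hprod : ∏ j, (r j).factorial = (∏ j, (g j).factorial) * r d := by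
      have e1 : ∀ j : Fin s, (r j).factorial
          = (g j).factorial * (if j = d then r d else 1) := by
        intro j
        by_cases h : j = d
        · subst h
          simp only [hg, if_pos rfl]
          rw [Nat.mul_comm]
          exact (Nat.mul_factorial_pred hrd).symm
        · simp [hg, h]
      rw [Finset.prod_congr rfl (fun j _ => e1 j), Finset.prod_mul_distrib,
        Finset.prod_ite_eq' Finset.univ d (fun _ => r d)]
      simp
    rw [hprod, ← Nat.mul_assoc, multinomial_count g hgsum]


/-- **Number of rooted ordered trees with a given degree distribution**:
for `(r_1,…,r_s)` with `∑ r_j = s+1` and `∑ j·r_j = 2s`, the number of plane trees with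
`s+1` vertices and degree distribution `r` is `2·s!/(r_1!⋯r_s!)`. -/
theorem card_planeTrees_degree_distribution (s : ℕ) (hs : 1 ≤ s) (r : Fin s → ℕ)
    (hsum : ∑ j, r j = s + 1) (hdeg : ∑ j, (j.1 + 1) * r j = 2 * s) :
    Nat.card {t : PlaneTree // t.size = s + 1 ∧ ∀ j : Fin s, t.degCount (j.1 + 1) = r j} =
      2 * Nat.factorial s / ∏ j, Nat.factorial (r j) := by
  have hs0 : 0 < s := hs
  haveI : NeZero s := ⟨hs0.ne'⟩
  rw [card_tree_eq_card_words s r, card_words_eq_card_sigma s hs r hsum,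
    card_sigma_eq_card_fun s hs r hsum hdeg, Nat.card_eq_fintype_card, Fintype.card_sigma]
  set P := ∏ j, (r j).factorial with hPdef
  have hP : 0 < P := Finset.prod_pos (fun j _ => Nat.factorial_pos _)
  set A := ∑ d : Fin s, Fintype.card {f : Fin s → Fin s //
      (∀ j : Fin s, fib f j + (if j = d then 1 else 0) = r j) ∧ GoodF hs (d.1 + 1) f} with hA
  have step1 : ∀ d : Fin s,
      s * (Fintype.card {f : Fin s → Fin s //
        (∀ j : Fin s, fib f j + (if j = d then 1 else 0) = r j) ∧ GoodF hs (d.1 + 1) f} * P)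
      = (d.1 + 1) * (s.factorial * r d) := by
    intro d
    have hdc := rot_double_count hs (d.1 + 1) (by omega)
      (fun f => ∀ j : Fin s, fib f j + (if j = d then 1 else 0) = r j)
      (fun a f hf j => by rw [fib_rot]; exact hf j)
      (fun f hf => sum_fin_val_of_cond hs r hsum hdeg d f hf)
    calc s * (Fintype.card {f : Fin s → Fin s //
          (∀ j : Fin s, fib f j + (if j = d then 1 else 0) = r j) ∧ GoodF hs (d.1 + 1) f} * P)
        = (s * Fintype.card {f : Fin s → Fin s //
          (∀ j : Fin s, fib f j + (if j = d then 1 else 0) = r j) ∧ GoodF hs (d.1 + 1) f}) * P := by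
          ring
      _ = ((d.1 + 1) * Fintype.card {f : Fin s → Fin s //
          ∀ j : Fin s, fib f j + (if j = d then 1 else 0) = r j}) * P := by rw [hdc]
      _ = (d.1 + 1) * (Fintype.card {f : Fin s → Fin s //
          ∀ j : Fin s, fib f j + (if j = d then 1 else 0) = r j} * P) := by ring
      _ = (d.1 + 1) * (s.factorial * r d) := by rw [card_cond_mul s r hsum d]
  have big : s * (A * P) = s * (2 * s.factorial) := by
    calc s * (A * P) = ∑ d : Fin s, s * (Fintype.card {f : Fin s → Fin s //
          (∀ j : Fin s, fib f j + (if j = d then 1 else 0) = r j) ∧ GoodF hs (d.1 + 1) f} * P) := by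
          rw [hA, Finset.sum_mul, Finset.mul_sum]
      _ = ∑ d : Fin s, (d.1 + 1) * (s.factorial * r d) := by
          exact Finset.sum_congr rfl fun d _ => step1 d
      _ = s.factorial * ∑ d : Fin s, (d.1 + 1) * r d := by
          rw [Finset.mul_sum]
          exact Finset.sum_congr rfl fun d _ => by ring
      _ = s.factorial * (2 * s) := by rw [hdeg]
      _ = s * (2 * s.factorial) := by ring
  have key : A * P = 2 * s.factorial := Nat.eq_of_mul_eq_mul_left hs0 big
  exact (Nat.div_eq_of_eq_mul_left hP key.symm).symm
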